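/- Let f = a₀x₀ + a₁x₁ + a₂x₂ + a₃x₀² + a₆x₁² + a₈x₂² + x₀x₁x₂ with a₃ = a₆ = a₈ = 0 and a₀a₁a₂ ≠ 0, i.e., f = a₀x₀ + a₁x₁ + a₂x₂ + x₀x₁x₂. Then the affine critical points of f are the solutions of x₁x₂ = -a₀, x₀x₂ = -a₁, x₀x₁ = -a₂, and there are exactly 2 critical points, each nondegenerate, so the total Milnor number μ = 2. -/

import Mathlib

open MvPolynomial

/-- `f = a₀x₀ + a₁x₁ + a₂x₂ + x₀x₁x₂`. -/
noncomputable def ftri (a0 a1 a2 : ℂ) : MvPolynomial (Fin 3) ℂ :=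
  C a0 * X 0 + C a1 * X 1 + C a2 * X 2 + X 0 * X 1 * X 2

lemma pd0 (a0 a1 a2 : ℂ) : pderiv 0 (ftri a0 a1 a2) = C a0 + X 1 * X 2 := by
  simp [ftri, pderiv_X]; ring
lemma pd1 (a0 a1 a2 : ℂ) : pderiv 1 (ftri a0 a1 a2) = C a1 + X 0 * X 2 := by
  simp [ftri, pderiv_X]; ring
lemma pd2 (a0 a1 a2 : ℂ) : pderiv 2 (ftri a0 a1 a2) = C a2 + X 0 * X 1 := by
  simp [ftri, pderiv_X]

section rank
variable (a0 a1 a2 : ℂ)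

noncomputable abbrev Itri : Ideal (MvPolynomial (Fin 3) ℂ) :=
  Ideal.span (Set.range fun i : Fin 3 => pderiv i (ftri a0 a1 a2))

lemma hgI (i : Fin 3) : pderiv i (ftri a0 a1 a2) ∈ Itri a0 a1 a2 :=
  Ideal.subset_span ⟨i, rfl⟩

lemma m01 : C a1 * X 1 - C a0 * X 0 ∈ Itri a0 a1 a2 := by
  have e : C a1 * X 1 - C a0 * X 0 =
      X 1 * pderiv 1 (ftri a0 a1 a2) - X 0 * pderiv 0 (ftri a0 a1 a2) := by
    rw [pd0, pd1]; ring
  rw [e]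
  exact Ideal.sub_mem _ (Ideal.mul_mem_left _ _ (hgI a0 a1 a2 1))
    (Ideal.mul_mem_left _ _ (hgI a0 a1 a2 0))

lemma m02 : C a2 * X 2 - C a0 * X 0 ∈ Itri a0 a1 a2 := by
  have e : C a2 * X 2 - C a0 * X 0 =
      X 2 * pderiv 2 (ftri a0 a1 a2) - X 0 * pderiv 0 (ftri a0 a1 a2) := by
    rw [pd0, pd2]; ring
  rw [e]
  exact Ideal.sub_mem _ (Ideal.mul_mem_left _ _ (hgI a0 a1 a2 2))
    (Ideal.mul_mem_left _ _ (hgI a0 a1 a2 0))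

lemma msq : C a0 * (X 0 * X 0) + C (a1 * a2) ∈ Itri a0 a1 a2 := by
  have e : C a0 * (X 0 * X 0) + C (a1 * a2) =
      X 0 * X 0 * pderiv 0 (ftri a0 a1 a2) - X 0 * X 2 * pderiv 2 (ftri a0 a1 a2)
        + C a2 * pderiv 1 (ftri a0 a1 a2) := by
    rw [pd0, pd1, pd2, map_mul]; ring
  rw [e]
  exact Ideal.add_mem _ (Ideal.sub_mem _ (Ideal.mul_mem_left _ _ (hgI a0 a1 a2 0))
    (Ideal.mul_mem_left _ _ (hgI a0 a1 a2 2))) (Ideal.mul_mem_left _ _ (hgI a0 a1 a2 1))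

variable (h0 : a0 ≠ 0) (h1 : a1 ≠ 0) (h2 : a2 ≠ 0)

-- keys of the quotient
local notation "Q" => MvPolynomial (Fin 3) ℂ ⧸ Itri a0 a1 a2
local notation "mk" => Ideal.Quotient.mk (Itri a0 a1 a2)

lemma mk_smul (c : ℂ) (f : MvPolynomial (Fin 3) ℂ) : mk (C c * f) = c • mk f := by
  rw [← smul_eq_C_mul, ← Ideal.Quotient.mkₐ_eq_mk ℂ]
  exact map_smul _ c f

lemma mk_C (c : ℂ) : mk (C c) = c • (1 : Q) := by
  rw [show (C c : MvPolynomial (Fin 3) ℂ) = C c * 1 by ring, mk_smul, map_one]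

include h1 in
lemma mkX1 : mk (X 1) = (a1⁻¹ * a0) • mk (X 0) := by
  have e : mk (C a1 * X 1) = mk (C a0 * X 0) := Ideal.Quotient.eq.mpr (m01 a0 a1 a2)
  rw [mk_smul, mk_smul] at e
  rw [mul_smul, ← e, smul_smul, inv_mul_cancel₀ h1, one_smul]

include h2 in
lemma mkX2 : mk (X 2) = (a2⁻¹ * a0) • mk (X 0) := by
  have e : mk (C a2 * X 2) = mk (C a0 * X 0) := Ideal.Quotient.eq.mpr (m02 a0 a1 a2)
  rw [mk_smul, mk_smul] at e
  rw [mul_smul, ← e, smul_smul, inv_mul_cancel₀ h2, one_smul]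

include h0 in
lemma mkX00 : mk (X 0 * X 0) = (a0⁻¹ * -(a1 * a2)) • (1 : Q) := by
  have z : mk (C a0 * (X 0 * X 0) + C (a1 * a2)) = 0 :=
    Ideal.Quotient.eq_zero_iff_mem.mpr (msq a0 a1 a2)
  rw [map_add] at z
  have e : mk (C a0 * (X 0 * X 0)) = -(mk (C (a1 * a2))) := by linear_combination z
  rw [mk_smul, mk_C, ← neg_smul] at e
  rw [mul_smul, ← e, smul_smul, inv_mul_cancel₀ h0, one_smul]

lemma mkX01 : mk (X 0 * X 1) = (-a2) • (1 : Q) := by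
  have e : mk (X 0 * X 1) = mk (C (-a2)) := by
    rw [Ideal.Quotient.eq]
    have := hgI a0 a1 a2 2
    rw [pd2] at this
    have e2 : (X 0 * X 1 - C (-a2) : MvPolynomial (Fin 3) ℂ) = C a2 + X 0 * X 1 := by
      rw [map_neg]; ring
    rw [e2]; exact this
  rw [e, mk_C]

lemma mkX02 : mk (X 0 * X 2) = (-a1) • (1 : Q) := by
  have e : mk (X 0 * X 2) = mk (C (-a1)) := by
    rw [Ideal.Quotient.eq]
    have := hgI a0 a1 a2 1
    rw [pd1] at this
    have e2 : (X 0 * X 2 - C (-a1) : MvPolynomial (Fin 3) ℂ) = C a1 + X 0 * X 2 := by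
      rw [map_neg]; ring
    rw [e2]; exact this
  rw [e, mk_C]

include h0 h1 h2 in
lemma span_top :
    Submodule.span ℂ ({1, mk (X 0)} : Set Q) = ⊤ := by
  set S := Submodule.span ℂ ({1, mk (X 0)} : Set Q) with hS
  have h1S : (1 : Q) ∈ S := Submodule.subset_span (Set.mem_insert _ _)
  have hX0S : mk (X 0) ∈ S := Submodule.subset_span (Set.mem_insert_of_mem _ rfl)
  have hXiS : ∀ i : Fin 3, mk (X i) ∈ S := by
    intro i
    fin_cases i
    · exact hX0S
    · rw [show ((⟨1, by norm_num⟩ : Fin 3)) = (1 : Fin 3) from rfl, mkX1 a0 a1 a2 h1]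
      exact S.smul_mem _ hX0S
    · rw [show ((⟨2, by norm_num⟩ : Fin 3)) = (2 : Fin 3) from rfl, mkX2 a0 a1 a2 h2]
      exact S.smul_mem _ hX0S
  have hmul : ∀ i : Fin 3, ∀ z ∈ S, z * mk (X i) ∈ S := by
    intro i z hz
    induction hz using Submodule.span_induction with
    | mem x hx =>
      rcases hx with hx | hx
      · subst hx; rw [one_mul]; exact hXiS i
      · simp only [Set.mem_singleton_iff] at hx
        subst hx
        rw [← map_mul]
        fin_cases i
        · rw [show ((⟨0, by norm_num⟩ : Fin 3)) = (0 : Fin 3) from rfl,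
            mkX00 a0 a1 a2 h0]
          exact S.smul_mem _ h1S
        · rw [show ((⟨1, by norm_num⟩ : Fin 3)) = (1 : Fin 3) from rfl, mkX01]
          exact S.smul_mem _ h1S
        · rw [show ((⟨2, by norm_num⟩ : Fin 3)) = (2 : Fin 3) from rfl, mkX02]
          exact S.smul_mem _ h1S
    | zero => rw [zero_mul]; exact S.zero_mem
    | add x y _ _ hx hy => rw [add_mul]; exact S.add_mem hx hy
    | smul c x _ hx => rw [smul_mul_assoc]; exact S.smul_mem _ hx
  rw [eq_top_iff]
  rintro z -
  obtain ⟨f, rfl⟩ := Ideal.Quotient.mk_surjective z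
  induction f using MvPolynomial.induction_on with
  | C c => rw [mk_C]; exact S.smul_mem _ h1S
  | add p q hp hq => rw [map_add]; exact S.add_mem hp hq
  | mul_X p i hp => rw [map_mul]; exact hmul i _ hp

end rank

lemma pdi (a0 a1 a2 : ℂ) (p : Fin 3 → ℂ) :
    (∀ i : Fin 3, eval p (pderiv i (ftri a0 a1 a2)) = 0) ↔
      (p 1 * p 2 = -a0 ∧ p 0 * p 2 = -a1 ∧ p 0 * p 1 = -a2) := by
  constructor
  · intro hp
    have h0 := hp 0; have h1 := hp 1; have h2 := hp 2
    rw [pd0] at h0; rw [pd1] at h1; rw [pd2] at h2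
    simp at h0 h1 h2
    exact ⟨by linear_combination h0, by linear_combination h1, by linear_combination h2⟩
  · rintro ⟨h0, h1, h2⟩ i
    fin_cases i <;> simp only [show ((⟨0, by norm_num⟩ : Fin 3) : Fin 3) = 0 from rfl,
      show ((⟨1, by norm_num⟩ : Fin 3) : Fin 3) = 1 from rfl,
      show ((⟨2, by norm_num⟩ : Fin 3) : Fin 3) = 2 from rfl]
    · rw [pd0]; simp; linear_combination h0
    · rw [pd1]; simp; linear_combination h1
    · rw [pd2]; simp; linear_combination h2

section evalsec
variable (I : Ideal (MvPolynomial (Fin 3) ℂ)) (p : Fin 3 → ℂ)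
  (hker : ∀ f ∈ I, aeval p f = 0)

noncomputable def evq : (MvPolynomial (Fin 3) ℂ ⧸ I) →ₐ[ℂ] ℂ :=
  Ideal.Quotient.liftₐ I (aeval p) hker

lemma evq_mk (f : MvPolynomial (Fin 3) ℂ) :
    evq I p hker (Ideal.Quotient.mk I f) = eval p f := by
  rw [evq, Ideal.Quotient.liftₐ_apply]; show (((aeval p : MvPolynomial (Fin 3) ℂ →ₐ[ℂ] ℂ) : MvPolynomial (Fin 3) ℂ →+* ℂ)) f = eval p f
  rw [coe_aeval_eq_eval]
end evalsec

/-- For `f = a₀x₀ + a₁x₁ + a₂x₂ + x₀x₁x₂` with `a₀a₁a₂ ≠ 0`: the critical points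
are exactly the solutions of `x₁x₂ = -a₀`, `x₀x₂ = -a₁`, `x₀x₁ = -a₂`; there are
exactly two of them, each nondegenerate (nonzero Hessian determinant), and the
total Milnor number `μ = dim ℂ[x₀,x₁,x₂]/Jf` equals `2`. -/
theorem triangle_two_nondegenerate_critical_points (a0 a1 a2 : ℂ)
    (h : a0 * a1 * a2 ≠ 0) :
    (∀ p : Fin 3 → ℂ,
      (∀ i : Fin 3, eval p (pderiv i (ftri a0 a1 a2)) = 0) ↔
        (p 1 * p 2 = -a0 ∧ p 0 * p 2 = -a1 ∧ p 0 * p 1 = -a2)) ∧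
    (∃ p q : Fin 3 → ℂ, p ≠ q ∧
      {x : Fin 3 → ℂ | ∀ i : Fin 3, eval x (pderiv i (ftri a0 a1 a2)) = 0} = {p, q}) ∧
    (∀ p : Fin 3 → ℂ, (∀ i : Fin 3, eval p (pderiv i (ftri a0 a1 a2)) = 0) →
      (Matrix.of fun i j : Fin 3 =>
        eval p (pderiv i (pderiv j (ftri a0 a1 a2)))).det ≠ 0) ∧
    Module.finrank ℂ
      (MvPolynomial (Fin 3) ℂ ⧸
        Ideal.span (Set.range fun i : Fin 3 => pderiv i (ftri a0 a1 a2))) = 2 := by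
  have h0 : a0 ≠ 0 := fun e => h (by rw [e]; ring)
  have h1 : a1 ≠ 0 := fun e => h (by rw [e]; ring)
  have h2 : a2 ≠ 0 := fun e => h (by rw [e]; ring)
  obtain ⟨s, hs0⟩ : ∃ s : ℂ, s ^ 2 = -(a1 * a2) / a0 :=
    IsAlgClosed.exists_pow_nat_eq _ (n := 2) (by norm_num)
  have hs : s ^ 2 * a0 = -(a1 * a2) := by
    rw [hs0]; field_simp
  have hsne : s ≠ 0 := by
    intro e
    rw [e] at hs0
    field_simp at hs0; simp [h1, h2] at hs0
  set p : Fin 3 → ℂ := ![s, -a2 / s, -a1 / s] with hpdef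
  set q : Fin 3 → ℂ := ![-s, a2 / s, a1 / s] with hqdef
  have hp0 : p 0 = s := rfl
  have hp1 : p 1 = -a2 / s := rfl
  have hp2 : p 2 = -a1 / s := rfl
  have hq0 : q 0 = -s := rfl
  have hq1 : q 1 = a2 / s := rfl
  have hq2 : q 2 = a1 / s := rfl
  have hpcrit : p 1 * p 2 = -a0 ∧ p 0 * p 2 = -a1 ∧ p 0 * p 1 = -a2 := by
    refine ⟨by simp only [hp1, hp2]; field_simp; linear_combination hs,
      by simp only [hp0, hp2]; field_simp,
      by simp only [hp0, hp1]; field_simp⟩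
  have hqcrit : q 1 * q 2 = -a0 ∧ q 0 * q 2 = -a1 ∧ q 0 * q 1 = -a2 := by
    refine ⟨by simp only [hq1, hq2]; field_simp; linear_combination hs,
      by simp only [hq0, hq2]; field_simp,
      by simp only [hq0, hq1]; field_simp⟩
  refine ⟨pdi a0 a1 a2, ⟨p, q, ?_, ?_⟩, ?_, ?_⟩
  · -- p ≠ q
    intro e
    have : p 0 = q 0 := by rw [e]
    rw [hp0, hq0] at this
    exact hsne (by linear_combination this / 2)
  · -- set equality
    ext x
    rw [Set.mem_setOf_eq, pdi a0 a1 a2]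
    constructor
    · rintro ⟨e0, e1, e2⟩
      have hx0 : x 0 ≠ 0 := by
        intro e
        apply h1
        rw [e, zero_mul] at e1
        linear_combination e1
      have hsq : (x 0 - s) * (x 0 + s) = 0 := by
        have key : a0 * (x 0 * x 0) = -(a1 * a2) := by
          linear_combination (x 0 * x 0) * e0 - (x 0 * x 2) * e2 + a2 * e1
        have : x 0 ^ 2 = s ^ 2 := by
          rw [hs0]; field_simp; linear_combination key
        linear_combination this
      rcases mul_eq_zero.mp hsq with hc | hc
      · left
        have hx0s : x 0 = s := by linear_combination hc
        funext i
        fin_cases i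
        · exact hx0s
        · rw [show ((⟨1, by norm_num⟩ : Fin 3) : Fin 3) = 1 from rfl, hp1]
          field_simp
          linear_combination e2 - x 1 * hx0s
        · rw [show ((⟨2, by norm_num⟩ : Fin 3) : Fin 3) = 2 from rfl, hp2]
          field_simp
          linear_combination e1 - x 2 * hx0s
      · right
        have hx0s : x 0 = -s := by linear_combination hc
        funext i
        fin_cases i
        · exact hx0s
        · rw [show ((⟨1, by norm_num⟩ : Fin 3) : Fin 3) = 1 from rfl, hq1]
          field_simp
          linear_combination -e2 + x 1 * hx0s
        · rw [show ((⟨2, by norm_num⟩ : Fin 3) : Fin 3) = 2 from rfl, hq2]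
          field_simp
          linear_combination -e1 + x 2 * hx0s
    · rintro (rfl | rfl)
      · exact hpcrit
      · exact hqcrit
  · -- Hessian
    intro x hx
    obtain ⟨e0, e1, e2⟩ := (pdi a0 a1 a2 x).mp hx
    have hdet : (Matrix.of fun i j : Fin 3 =>
        eval x (pderiv i (pderiv j (ftri a0 a1 a2)))).det = 2 * (x 0 * x 1 * x 2) := by
      rw [Matrix.det_fin_three]
      simp [ftri, pderiv_X]
      ring
    rw [hdet]
    have hsq : (x 0 * x 1 * x 2) ^ 2 = -(a0 * a1 * a2) := by
      linear_combination (x 0 * x 2 * (x 1 * x 2)) * e2 + (-(a2) * (x 1 * x 2)) * e1 +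
        (a1 * a2) * e0
    intro hz
    apply h
    have : x 0 * x 1 * x 2 = 0 := by
      rcases mul_eq_zero.mp hz with hc | hc
      · norm_num at hc
      · exact hc
    rw [this] at hsq
    linear_combination hsq
  · -- finrank
    have hkp : ∀ f ∈ Itri a0 a1 a2, aeval p f = 0 := by
      intro f hf
      have hle : Itri a0 a1 a2 ≤ RingHom.ker (aeval p : MvPolynomial (Fin 3) ℂ →ₐ[ℂ] ℂ) := by
        rw [Ideal.span_le]
        rintro _ ⟨i, rfl⟩
        rw [SetLike.mem_coe, RingHom.mem_ker]
        show (aeval p) (pderiv i (ftri a0 a1 a2)) = 0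
        rw [show (aeval p) (pderiv i (ftri a0 a1 a2)) =
          eval p (pderiv i (ftri a0 a1 a2)) from by rw [← coe_aeval_eq_eval]; rfl]
        exact (pdi a0 a1 a2 p).mpr hpcrit i
      exact hle hf
    have hkq : ∀ f ∈ Itri a0 a1 a2, aeval q f = 0 := by
      intro f hf
      have hle : Itri a0 a1 a2 ≤ RingHom.ker (aeval q : MvPolynomial (Fin 3) ℂ →ₐ[ℂ] ℂ) := by
        rw [Ideal.span_le]
        rintro _ ⟨i, rfl⟩
        rw [SetLike.mem_coe, RingHom.mem_ker]
        show (aeval q) (pderiv i (ftri a0 a1 a2)) = 0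
        rw [show (aeval q) (pderiv i (ftri a0 a1 a2)) =
          eval q (pderiv i (ftri a0 a1 a2)) from by rw [← coe_aeval_eq_eval]; rfl]
        exact (pdi a0 a1 a2 q).mpr hqcrit i
      exact hle hf
    set Qr := MvPolynomial (Fin 3) ℂ ⧸ Itri a0 a1 a2 with hQr
    have hspan := span_top a0 a1 a2 h0 h1 h2
    have hfin : Module.Finite ℂ Qr :=
      ⟨by rw [← hspan]; exact Submodule.fg_span (Set.toFinite _)⟩
    -- upper bound
    have hub : Module.finrank ℂ Qr ≤ 2 := by
      classical
      have hle := finrank_span_le_card (R := ℂ)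
        ({1, Ideal.Quotient.mk (Itri a0 a1 a2) (X 0)} : Set Qr)
      rw [hspan, finrank_top] at hle
      refine hle.trans ?_
      rw [Set.toFinset_insert, Set.toFinset_singleton]
      exact (Finset.card_insert_le _ _).trans (by simp)
    -- lower bound
    have hlb : 2 ≤ Module.finrank ℂ Qr := by
      set ψ : Qr →ₗ[ℂ] ℂ × ℂ :=
        ((evq (Itri a0 a1 a2) p hkp).toLinearMap).prod
          ((evq (Itri a0 a1 a2) q hkq).toLinearMap) with hψ
      have li : LinearIndependent ℂ
          ![(1 : Qr), Ideal.Quotient.mk (Itri a0 a1 a2) (X 0)] := by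
        apply LinearIndependent.of_comp ψ
        have hcomp : ψ ∘ ![(1 : Qr), Ideal.Quotient.mk (Itri a0 a1 a2) (X 0)] =
            ![((1 : ℂ), (1 : ℂ)), (s, -s)] := by
          funext i
          fin_cases i
          · show ψ 1 = (1, 1)
            rw [hψ]
            simp
          · show ψ (Ideal.Quotient.mk (Itri a0 a1 a2) (X 0)) = (s, -s)
            rw [hψ]
            simp only [LinearMap.prod_apply, AlgHom.toLinearMap_apply, Function.prod]
            rw [evq_mk, evq_mk, eval_X, eval_X, hp0, hq0]
        rw [hcomp]
        rw [linearIndependent_fin2]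
        constructor
        · simp only [Matrix.cons_val_one, Matrix.head_cons, Matrix.cons_val_zero, ne_eq, Prod.mk_eq_zero, not_and]
          intro e; exact absurd e hsne
        · intro a ha
          simp only [Matrix.cons_val_one, Matrix.head_cons, Matrix.cons_val_zero,
            Prod.smul_mk, smul_eq_mul, Prod.mk.injEq] at ha
          obtain ⟨e1', e2'⟩ := ha
          have : (1 : ℂ) = -1 := by linear_combination -e1' - e2'
          norm_num at this
      have := li.fintype_card_le_finrank
      simpa using this
    exact le_antisymm hub hlb
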